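/- A configuration a lies on a nontrivial directed cycle of the move graph (i.e., there is a sequence of one or more legal moves returning to a) if and only if every entry of a equals k or k+1, where n = kp + q with 0 < q < p. -/

import Mathlib

/-- One step of the Game of Cards: player `i` gives a card to player `i+1` (mod `p`). -/
def step (p : ℕ) [NeZero p] (a : Fin p → ℕ) (i : Fin p) : Fin p → ℕ :=
  Function.update (Function.update a i (a i - 1)) (i + 1) (a (i + 1) + 1)

/-- The move at position `i` is legal iff the right neighbour has strictly fewer cards. -/
def legal (p : ℕ) [NeZero p] (a : Fin p → ℕ) (i : Fin p) : Prop := a (i + 1) < a i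

/-- The move relation of the Game of Cards. -/
def Move (p : ℕ) [NeZero p] (a b : Fin p → ℕ) : Prop :=
  ∃ i : Fin p, legal p a i ∧ b = step p a i

/-- `playList p a L b` : playing the (legal) moves recorded in the list `L` of positions,
starting from `a`, ends in `b`. -/
def playList (p : ℕ) [NeZero p] : (Fin p → ℕ) → List (Fin p) → (Fin p → ℕ) → Prop
  | a, [], b => b = a
  | a, i :: L, b => legal p a i ∧ playList p (step p a i) L b

/-- `dvec p a b j` is the `j`-th prefix-sum difference `(a_0+⋯+a_j) - (b_0+⋯+b_j)`. -/
def dvec (p : ℕ) (a b : Fin p → ℕ) (j : Fin p) : ℤ :=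
  ∑ i ∈ Finset.univ.filter (· ≤ j), ((a i : ℤ) - (b i : ℤ))

/-- A configuration is dual iff `p ∤ n` and every entry is `k` or `k+1` where `k = n / p`. -/
def Dual (p n : ℕ) (a : Fin p → ℕ) : Prop :=
  ¬ p ∣ n ∧ ∀ i, a i = n / p ∨ a i = n / p + 1

/-- The last index of `Fin p` (the `p`-th player). -/
def lastIdx (p : ℕ) [NeZero p] : Fin p :=
  ⟨p - 1, Nat.sub_lt (Nat.pos_of_ne_zero (NeZero.ne p)) Nat.one_pos⟩

/-- The list of configurations visited when playing the moves in `L` from `a`. -/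
def trace (p : ℕ) [NeZero p] : (Fin p → ℕ) → List (Fin p) → List (Fin p → ℕ)
  | a, [] => [a]
  | a, i :: L => a :: trace p (step p a i) L

variable {p : ℕ} [NeZero p]

open Fin.CommRing

lemma my_succ_ne (hp : 1 < p) (i : Fin p) : i + 1 ≠ i := by
  intro h
  have h2 : (1 : Fin p) = 0 := by
    have := add_left_cancel (a := i) (b := (1:Fin p)) (c := 0)
    apply this; simpa using h
  have h3 : ((1:Fin p)).val = 1 % p := Fin.val_one' p
  rw [h2] at h3; simp at h3; omega

lemma step_apply (a : Fin p → ℕ) (i j : Fin p) :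
    step p a i j = if j = i + 1 then a (i+1) + 1 else if j = i then a i - 1 else a j := by
  unfold step
  rcases eq_or_ne j (i+1) with rfl | h1
  · simp
  · rcases eq_or_ne j i with rfl | h2
    · rw [Function.update_of_ne h1, Function.update_self, if_neg h1, if_pos rfl]
    · rw [Function.update_of_ne h1, Function.update_of_ne h2, if_neg h1, if_neg h2]

lemma step_apply_int (hp : 1 < p) {a : Fin p → ℕ} {i : Fin p} (hl : legal p a i) (j : Fin p) :
    ((step p a i j : ℤ)) = a j + (if j = i + 1 then 1 else 0) - (if j = i then 1 else 0) := by
  have h1 : 1 ≤ a i := lt_of_le_of_lt (Nat.zero_le _) hl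
  rw [step_apply]
  rcases eq_or_ne j (i+1) with rfl | hj1
  · simp [my_succ_ne hp i]
  · rcases eq_or_ne j i with rfl | hj2
    · simp only [if_neg hj1, if_pos rfl]
      push_cast [h1]; ring
    · simp only [if_neg hj1, if_neg hj2]
      push_cast; ring

/-- tight play -/
def TPlay (p : ℕ) [NeZero p] : (Fin p → ℕ) → List (Fin p) → (Fin p → ℕ) → Prop
  | a, [], b => b = a
  | a, i :: L, b => legal p a i ∧ a i = a (i+1) + 1 ∧ TPlay p (step p a i) L b

def Phi (a : Fin p → ℕ) : ℤ := ∑ i, (a i : ℤ)^2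

lemma phi_step (hp : 1 < p) {a : Fin p → ℕ} {i : Fin p} (hl : legal p a i) :
    Phi (step p a i) = Phi a - 2*((a i : ℤ) - a (i+1) - 1) := by
  have key : ∀ j, ((step p a i j : ℤ))^2 - (a j)^2
      = (if j = i + 1 then 2*(a (i+1):ℤ) + 1 else 0) + (if j = i then 1 - 2*(a i:ℤ) else 0) := by
    intro j
    rw [step_apply_int hp hl]
    rcases eq_or_ne j (i+1) with rfl | hj1
    · rw [if_pos rfl, if_neg (my_succ_ne hp i), if_pos rfl, if_neg (my_succ_ne hp i)]; ring
    · rcases eq_or_ne j i with rfl | hj2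
      · rw [if_neg hj1, if_pos rfl, if_neg hj1, if_pos rfl]; ring
      · rw [if_neg hj1, if_neg hj2, if_neg hj1, if_neg hj2]; ring
  have h2 : Phi (step p a i) - Phi a = ∑ j, (((step p a i j : ℤ))^2 - (a j)^2) := by
    rw [Phi, Phi, ← Finset.sum_sub_distrib]
  rw [Finset.sum_congr rfl (fun j _ => key j)] at h2
  rw [Finset.sum_add_distrib, Finset.sum_ite_eq' Finset.univ (i+1), Finset.sum_ite_eq' Finset.univ i] at h2
  simp only [Finset.mem_univ, if_pos] at h2
  linarith

lemma phi_step_le (hp : 1 < p) {a : Fin p → ℕ} {i : Fin p} (hl : legal p a i) :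
    Phi (step p a i) ≤ Phi a := by
  rw [phi_step hp hl]
  have : (a (i+1) : ℤ) + 1 ≤ a i := by exact_mod_cast hl
  linarith

lemma phi_play_le (hp : 1 < p) {L : List (Fin p)} :
    ∀ {a b : Fin p → ℕ}, playList p a L b → Phi b ≤ Phi a := by
  induction L with
  | nil => intro a b hab; rw [show b = a from hab]
  | cons i L ih => intro a b hab; exact le_trans (ih hab.2) (phi_step_le hp hab.1)

lemma tplay_of_play (hp : 1 < p) {L : List (Fin p)} :
    ∀ {a b : Fin p → ℕ}, playList p a L b → Phi a ≤ Phi b → TPlay p a L b := by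
  induction L with
  | nil => intro a b hab _; exact hab
  | cons i L ih =>
    intro a b hab hphi
    obtain ⟨hl, hrest⟩ := hab
    have h1 : Phi b ≤ Phi (step p a i) := phi_play_le hp hrest
    have h2 : Phi (step p a i) ≤ Phi a := phi_step_le hp hl
    have heq : Phi (step p a i) = Phi a := le_antisymm h2 (le_trans hphi h1)
    have htight : a i = a (i+1) + 1 := by
      rw [phi_step hp hl] at heq
      have : (a i : ℤ) = a (i+1) + 1 := by linarith
      exact_mod_cast this
    exact ⟨hl, htight, ih hrest (by omega)⟩

lemma play_append {L L' : List (Fin p)} :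
    ∀ {a b c : Fin p → ℕ}, playList p a L b → playList p b L' c → playList p a (L ++ L') c := by
  induction L with
  | nil => intro a b c h1 h2; rw [show b = a from h1] at h2; simpa using h2
  | cons i L ih => intro a b c h1 h2; exact ⟨h1.1, ih h1.2 h2⟩

lemma transGen_play {a b : Fin p → ℕ} (h : Relation.TransGen (Move p) a b) :
    ∃ L : List (Fin p), L ≠ [] ∧ playList p a L b := by
  induction h with
  | single hm => obtain ⟨i, hl, rfl⟩ := hm; exact ⟨[i], by simp, hl, rfl⟩
  | tail _ hm ih =>
    obtain ⟨L, hL, hplay⟩ := ih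
    obtain ⟨i, hl, rfl⟩ := hm
    exact ⟨L ++ [i], by simp, play_append hplay ⟨hl, rfl⟩⟩

lemma play_count (hp : 1 < p) {L : List (Fin p)} :
    ∀ {a b : Fin p → ℕ}, playList p a L b →
      ∀ j, (b j : ℤ) = a j + L.count (j-1) - L.count j := by
  induction L with
  | nil => intro a b hab j; rw [show b = a from hab]; simp
  | cons i L ih =>
    intro a b hab j
    have h1 := ih hab.2 j
    rw [step_apply_int hp hab.1] at h1
    have hc1 : (((i :: L).count (j-1) : ℤ)) = L.count (j-1) + (if j = i+1 then 1 else 0) := by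
      rw [List.count_cons]
      by_cases h : j = i + 1
      · have e : i = j - 1 := by rw [h]; ring
        simp [h, ← e]
      · have e : i ≠ j - 1 := fun he => h (by rw [he]; ring)
        simp [h, e]
    have hc2 : (((i :: L).count j : ℤ)) = L.count j + (if j = i then 1 else 0) := by
      rw [List.count_cons]
      by_cases h : j = i
      · simp [h]
      · simp [h, Ne.symm h]
    rw [hc1, hc2]
    split_ifs at h1 ⊢ <;> linarith

lemma val_sub_one {z : Fin p} (hp : 1 < p) (hz : z ≠ 0) : (z - 1).val = z.val - 1 := by
  have h1 : ((1:Fin p)).val = 1 := by rw [Fin.val_one']; exact Nat.mod_eq_of_lt hp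
  have h2 : z.val < p := z.isLt
  have h3 : z.val ≠ 0 := fun h => hz (Fin.ext h)
  rw [Fin.sub_def, h1]
  show (p - 1 + z.val) % p = z.val - 1
  have e : p - 1 + z.val = p + (z.val - 1) := by omega
  rw [e, Nat.add_mod_left]
  exact Nat.mod_eq_of_lt (by omega)

lemma mem_all_of_cycle (hp : 1 < p) {L : List (Fin p)} {a : Fin p → ℕ}
    (hpl : playList p a L a) (hne : L ≠ []) : ∀ j, j ∈ L := by
  have h1 : ∀ j : Fin p, L.count (j - 1) = L.count j := by
    intro j
    have := play_count hp hpl j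
    omega
  have h2 : ∀ j : Fin p, L.count j = L.count (j + 1) := by
    intro j
    have := h1 (j + 1)
    rwa [show j + 1 - 1 = j by ring] at this
  have h3 : ∀ m : ℕ, L.count ((m : Fin p)) = L.count 0 := by
    intro m
    induction m with
    | zero => simp
    | succ n ih => rw [show ((n+1 : ℕ) : Fin p) = (n : Fin p) + 1 by push_cast; ring, ← h2]; exact ih
  have h4 : ∀ j : Fin p, L.count j = L.count 0 := by
    intro j; have := h3 j.val; rwa [Fin.cast_val_eq_self j] at this
  obtain ⟨j₀, hj₀⟩ := List.exists_mem_of_ne_nil L hne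
  intro j
  rw [← List.count_pos_iff, h4 j, ← h4 j₀]
  exact List.count_pos_iff.mpr hj₀

def playSeq (p : ℕ) [NeZero p] (a : Fin p → ℕ) (J : ℕ → Fin p) : ℕ → (Fin p → ℕ)
  | 0 => a
  | s+1 => step p (playSeq p a J s) (J s)

lemma playSeq_add (a : Fin p → ℕ) (J : ℕ → Fin p) (s : ℕ) :
    ∀ m, playSeq p a J (s + m) = playSeq p (playSeq p a J s) (fun t => J (s + t)) m := by
  intro m
  induction m with
  | zero => rfl
  | succ n ih => show step p (playSeq p a J (s + n)) (J (s+n)) = _; rw [ih]; rfl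

lemma tplay_seq {L : List (Fin p)} :
    ∀ {a b : Fin p → ℕ} (J : ℕ → Fin p), TPlay p a L b →
      (∀ r (h : r < L.length), J r = L.get ⟨r, h⟩) →
      playSeq p a J L.length = b ∧
      ∀ r, r < L.length → legal p (playSeq p a J r) (J r) ∧
        (playSeq p a J r) (J r) = (playSeq p a J r) (J r + 1) + 1 := by
  induction L with
  | nil =>
    intro a b J ht _
    exact ⟨(show b = a from ht).symm, fun r hr => absurd hr (by simp)⟩
  | cons i L ih =>
    intro a b J ht hJ
    obtain ⟨hl, htight, hrest⟩ := ht
    have hJ0 : J 0 = i := hJ 0 (by simp)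
    have key := ih (a := step p a i) (fun t => J (t+1)) hrest (fun r h => by
      have := hJ (r+1) (by simpa using Nat.succ_lt_succ h)
      simpa using this)
    have hshift : ∀ r, playSeq p a J (r+1) = playSeq p (step p a i) (fun t => J (t+1)) r := by
      intro r
      induction r with
      | zero => show step p a (J 0) = _; rw [hJ0]; rfl
      | succ n ihn => show step p (playSeq p a J (n+1)) (J (n+1)) = _; rw [ihn]; rfl
    constructor
    · show playSeq p a J (L.length + 1) = b
      rw [show L.length + 1 = L.length + 1 from rfl]
      have : playSeq p a J (L.length + 1) = playSeq p (step p a i) (fun t => J (t+1)) L.length :=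
        hshift L.length
      rw [this]; exact key.1
    · intro r hr
      cases r with
      | zero =>
        constructor
        · show legal p a (J 0); rw [hJ0]; exact hl
        · show a (J 0) = a (J 0 + 1) + 1; rw [hJ0]; exact htight
      | succ n =>
        rw [hshift n]
        exact key.2 n (by simpa using Nat.lt_of_succ_lt_succ hr)

lemma infinite_play (hp : 1 < p) {L : List (Fin p)} {a : Fin p → ℕ}
    (hT : TPlay p a L a) (hlen : 0 < L.length) :
    ∃ J : ℕ → Fin p,
      (∀ s, legal p (playSeq p a J s) (J s)) ∧
      (∀ s, (playSeq p a J s) (J s) = (playSeq p a J s) (J s + 1) + 1) ∧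
      (∀ s (j : Fin p), j ∈ L → ∃ t, s ≤ t ∧ t < s + L.length ∧ J t = j) := by
  set len := L.length with hlendef
  refine ⟨fun s => L.get ⟨s % len, Nat.mod_lt _ hlen⟩, ?_⟩
  set J : ℕ → Fin p := fun s => L.get ⟨s % len, Nat.mod_lt _ hlen⟩ with hJdef
  have hJmod : ∀ s, J s = J (s % len) := by
    intro s
    have h : (s % len) % len = s % len := Nat.mod_eq_of_lt (Nat.mod_lt _ hlen)
    simp only [hJdef]
    exact congrArg L.get (Fin.ext h.symm)
  have key := tplay_seq J hT (fun r h => by simp only [hJdef, Nat.mod_eq_of_lt h]; exact congrArg L.get (Fin.ext (Nat.mod_eq_of_lt h)))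
  have hper : ∀ s, playSeq p a J (len + s) = playSeq p a J s := by
    intro s
    have h1 : playSeq p a J (len + s) = playSeq p (playSeq p a J len) (fun t => J (len + t)) s :=
      playSeq_add a J len s
    have h2 : (fun t => J (len + t)) = J := by
      funext t; simp only [hJdef, Nat.add_mod_left]
    rw [h1, h2, key.1]
  have hmod : ∀ s, playSeq p a J s = playSeq p a J (s % len) := by
    intro s
    conv_lhs => rw [← Nat.div_add_mod s len]
    generalize s / len = c
    induction c with
    | zero => simp
    | succ n ih =>
      have : len * (n+1) + s % len = len + (len * n + s % len) := by ring
      rw [this, hper]; exact ih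
  refine ⟨?_, ?_, ?_⟩
  · intro s
    rw [hmod s, hJmod s]
    exact (key.2 (s % len) (Nat.mod_lt _ hlen)).1
  · intro s
    rw [hmod s, hJmod s]
    exact (key.2 (s % len) (Nat.mod_lt _ hlen)).2
  · intro s j hj
    obtain ⟨r, hr⟩ := List.mem_iff_get.mp hj
    refine ⟨if s % len ≤ r.val then len * (s / len) + r.val else len * (s / len + 1) + r.val, ?_, ?_, ?_⟩
    · have h1 := Nat.div_add_mod s len
      have hrlt := r.isLt
      have hll : len = L.length := hlendef
      have e1 : len * (s/len + 1) = len * (s/len) + len := by ring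
      have h2 : s % len < len := Nat.mod_lt _ hlen
      split_ifs <;> omega
    · have h1 := Nat.div_add_mod s len
      have hrlt := r.isLt
      have hll : len = L.length := hlendef
      have e1 : len * (s/len + 1) = len * (s/len) + len := by ring
      have h2 : s % len < len := Nat.mod_lt _ hlen
      split_ifs <;> omega
    · have hrlt := r.isLt
      have hmodr : ∀ c : ℕ, (len * c + r.val) % len = r.val := by
        intro c; rw [Nat.mul_add_mod]; exact Nat.mod_eq_of_lt hrlt
      split_ifs <;> · simp only [hJdef, hmodr]; exact hr

def trX (p : ℕ) [NeZero p] (J : ℕ → Fin p) (x0 : Fin p) : ℕ → Fin p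
  | 0 => x0
  | s+1 => if J s = trX p J x0 s then trX p J x0 s + 1 else trX p J x0 s

def trY (p : ℕ) [NeZero p] (J : ℕ → Fin p) (y0 : Fin p) : ℕ → Fin p
  | 0 => y0
  | s+1 => if J s = trY p J y0 s - 1 then trY p J y0 s - 1 else trY p J y0 s

lemma playSeq_succ (a : Fin p → ℕ) (J : ℕ → Fin p) (s : ℕ) :
    playSeq p a J (s+1) = step p (playSeq p a J s) (J s) := rfl

lemma trX_succ (J : ℕ → Fin p) (x0 : Fin p) (s : ℕ) :
    trX p J x0 (s+1) = if J s = trX p J x0 s then trX p J x0 s + 1 else trX p J x0 s := rfl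

lemma trY_succ (J : ℕ → Fin p) (y0 : Fin p) (s : ℕ) :
    trY p J y0 (s+1) = if J s = trY p J y0 s - 1 then trY p J y0 s - 1 else trY p J y0 s := rfl

lemma no_cycle_spread (hp : 1 < p) {a : Fin p → ℕ} {M μ : ℕ} (hM2 : μ + 2 ≤ M)
    (hub : ∀ i, a i ≤ M) (hlb : ∀ i, μ ≤ a i) {i₀ j₀ : Fin p} (hi₀ : a i₀ = M) (hj₀ : a j₀ = μ)
    {J : ℕ → Fin p} (hleg : ∀ s, legal p (playSeq p a J s) (J s))
    (htig : ∀ s, (playSeq p a J s) (J s) = (playSeq p a J s) (J s + 1) + 1)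
    {len : ℕ} (hlen : 0 < len)
    (hwin : ∀ s (j : Fin p), ∃ t, s ≤ t ∧ t < s + len ∧ J t = j) : False := by
  set A := playSeq p a J with hA
  set X := trX p J i₀ with hXdef
  set Y := trY p J j₀ with hYdef
  have hstep : ∀ s jj, A (s+1) jj =
      if jj = J s + 1 then A s (J s + 1) + 1 else if jj = J s then A s (J s) - 1 else A s jj := by
    intro s jj
    rw [hA, playSeq_succ, step_apply]
  have inv : ∀ s, (∀ i, A s i ≤ M) ∧ (∀ i, μ ≤ A s i) ∧ A s (X s) = M ∧ A s (Y s) = μ := by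
    intro s
    induction s with
    | zero => exact ⟨hub, hlb, hi₀, hj₀⟩
    | succ s ih =>
      obtain ⟨hu, hl2, hX, hY⟩ := ih
      have hlegs : A s (J s + 1) < A s (J s) := hleg s
      have htigs : A s (J s) = A s (J s + 1) + 1 := htig s
      have hub' : ∀ i, A (s+1) i ≤ M := by
        intro i; rw [hstep s i]; split_ifs with h1 h2
        · have := hu (J s); omega
        · have := hu (J s); omega
        · exact hu i
      have hlb' : ∀ i, μ ≤ A (s+1) i := by
        intro i; rw [hstep s i]; split_ifs with h1 h2
        · have := hl2 (J s + 1); omega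
        · have := hl2 (J s + 1); omega
        · exact hl2 i
      have hX' : A (s+1) (X (s+1)) = M := by
        rw [hXdef, trX_succ, ← hXdef]
        by_cases hc : J s = X s
        · rw [if_pos hc, hstep s, if_pos (by rw [hc])]
          rw [hc] at htigs
          rw [hc] -- rewrite J s + 1 in goal? already fixed
          omega
        · rw [if_neg hc, hstep s]
          have h1 : X s ≠ J s + 1 := by
            intro he
            rw [← he] at htigs
            have := hu (J s); omega
          rw [if_neg h1, if_neg (fun he => hc he.symm)]
          exact hX
      have hY' : A (s+1) (Y (s+1)) = μ := by
        rw [hYdef, trY_succ, ← hYdef]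
        by_cases hc : J s = Y s - 1
        · have hy1 : J s + 1 = Y s := by rw [hc]; ring
          rw [if_pos hc, ← hc, hstep s]
          rw [if_neg (fun he => my_succ_ne hp (J s) he.symm), if_pos rfl]
          rw [hy1] at htigs
          omega
        · rw [if_neg hc, hstep s]
          have h1 : Y s ≠ J s + 1 := fun he => hc (by rw [he]; ring)
          have h2 : Y s ≠ J s := by
            intro he
            rw [← he] at hlegs
            have := hl2 (Y s + 1); omega
          rw [if_neg h1, if_neg h2]
          exact hY
      exact ⟨hub', hlb', hX', hY'⟩
  have hne : ∀ s, Y s - X s ≠ 0 := by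
    intro s h
    have hxy : Y s = X s := by rwa [sub_eq_zero] at h
    have h1 := (inv s).2.2.1
    have h2 := (inv s).2.2.2
    rw [hxy] at h2
    omega
  set d : ℕ → ℕ := fun s => (Y s - X s).val with hddef
  have hdpos : ∀ s, 1 ≤ d s := by
    intro s
    rcases Nat.eq_zero_or_pos (d s) with h | h
    · exact absurd (Fin.ext (by simpa [hddef] using h) : Y s - X s = 0) (hne s)
    · exact h
  have hstepd : ∀ s, (d (s+1) ≤ d s) ∧ (J s = X s → d (s+1) < d s) := by
    intro s
    have hXd : X (s+1) = if J s = X s then X s + 1 else X s := trX_succ J i₀ s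
    have hYd : Y (s+1) = if J s = Y s - 1 then Y s - 1 else Y s := trY_succ J j₀ s
    have htigs : A s (J s) = A s (J s + 1) + 1 := htig s
    by_cases hc1 : J s = X s
    · have hc2 : J s ≠ Y s - 1 := by
        intro he
        have hy1 : Y s = J s + 1 := by rw [he]; ring
        have hX := (inv s).2.2.1
        have hY := (inv s).2.2.2
        rw [hy1] at hY
        rw [← hc1] at hX
        omega
      have e1 : Y (s+1) - X (s+1) = (Y s - X s) - 1 := by
        rw [hXd, hYd, if_pos hc1, if_neg hc2]; ring
      have e2 : d (s+1) = d s - 1 := by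
        rw [hddef]; simp only []; rw [e1, val_sub_one hp (hne s)]
      have := hdpos s
      constructor
      · omega
      · intro _; omega
    · by_cases hc2 : J s = Y s - 1
      · have e1 : Y (s+1) - X (s+1) = (Y s - X s) - 1 := by
          rw [hXd, hYd, if_neg hc1, if_pos hc2]; ring
        have e2 : d (s+1) = d s - 1 := by
          rw [hddef]; simp only []; rw [e1, val_sub_one hp (hne s)]
        exact ⟨by omega, fun h => absurd h hc1⟩
      · have e1 : Y (s+1) - X (s+1) = Y s - X s := by
          rw [hXd, hYd, if_neg hc1, if_neg hc2]
        have e2 : d (s+1) = d s := by rw [hddef]; simp only []; rw [e1]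
        exact ⟨by omega, fun h => absurd h hc1⟩
  have hmono : ∀ s m, d (s + m) ≤ d s := by
    intro s m
    induction m with
    | zero => exact le_of_eq (by rw [Nat.add_zero])
    | succ n ih =>
      have e : s + (n+1) = (s + n) + 1 := rfl
      have h1 := (hstepd (s + n)).1
      rw [e]; omega
  have hwind : ∀ s, d (s + len) < d s := by
    intro s
    by_cases hex : ∃ t, s ≤ t ∧ t < s + len ∧ J t = X t
    · obtain ⟨t, ht1, ht2, ht3⟩ := hex
      have h1 : d (t+1) < d t := (hstepd t).2 ht3
      have h2 : d (s + len) ≤ d (t+1) := by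
        have := hmono (t+1) (s + len - (t+1)); rwa [Nat.add_sub_cancel' (by omega)] at this
      have h3 : d t ≤ d s := by
        have := hmono s (t - s); rwa [Nat.add_sub_cancel' ht1] at this
      omega
    · exfalso
      push_neg at hex
      have hconst : ∀ m, m ≤ len → X (s + m) = X s := by
        intro m hm
        induction m with
        | zero => rfl
        | succ n ihn =>
          have hxn : X (s + n) = X s := ihn (by omega)
          have hnm : J (s+n) ≠ X (s+n) := fun he => hex (s+n) (by omega) (by omega) he
          have : X (s + n + 1) = X (s + n) := by
            rw [hXdef, trX_succ, ← hXdef, if_neg hnm]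
          rw [show s + (n+1) = s + n + 1 from rfl, this, hxn]
      obtain ⟨t, ht1, ht2, ht3⟩ := hwin s (X s)
      have hXt : X t = X s := by
        have he : t = s + (t - s) := by omega
        rw [he]; exact hconst (t - s) (by omega)
      exact hex t ht1 ht2 (by rw [ht3, hXt])
  have hdesc : ∀ N, d (N * len) + N ≤ d 0 := by
    intro N
    induction N with
    | zero => simp
    | succ n ih =>
      have e : (n+1) * len = n * len + len := by ring
      have h1 := hwind (n * len)
      rw [e]
      omega
  have h1 := hdesc (d 0 + 1)
  have h2 := hdpos ((d 0 + 1) * len)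
  omega

lemma forward_dir {k q : ℕ} (hq : 0 < q) (hqp : q < p)
    {a : Fin p → ℕ} (h : ∑ i, a i = k * p + q)
    (hcyc : Relation.TransGen (Move p) a a) : ∀ i, a i = k ∨ a i = k + 1 := by
  have hp : 1 < p := by omega
  obtain ⟨L, hLne, hplay⟩ := transGen_play hcyc
  have hT : TPlay p a L a := tplay_of_play hp hplay le_rfl
  have hmem := mem_all_of_cycle hp hplay hLne
  have hlen : 0 < L.length := List.length_pos_iff.mpr hLne
  obtain ⟨J, hleg, htig, hwin'⟩ := infinite_play hp hT hlen
  have hwin : ∀ s (j : Fin p), ∃ t, s ≤ t ∧ t < s + L.length ∧ J t = j :=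
    fun s j => hwin' s j (hmem j)
  have hpne : (Finset.univ : Finset (Fin p)).Nonempty := ⟨⟨0, by omega⟩, Finset.mem_univ _⟩
  obtain ⟨i₀, -, hi₀⟩ := Finset.exists_max_image Finset.univ a hpne
  obtain ⟨j₀, -, hj₀⟩ := Finset.exists_min_image Finset.univ a hpne
  have hub : ∀ i, a i ≤ a i₀ := fun i => hi₀ i (Finset.mem_univ i)
  have hlb : ∀ i, a j₀ ≤ a i := fun i => hj₀ i (Finset.mem_univ i)
  by_contra hcon
  push_neg at hcon
  obtain ⟨i₁, hi₁, hi₁'⟩ := hcon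
  have hsum_lb : p * a j₀ ≤ ∑ i, a i := by
    calc p * a j₀ = ∑ _i : Fin p, a j₀ := by
          rw [Finset.sum_const, Finset.card_univ, Fintype.card_fin, smul_eq_mul]
      _ ≤ ∑ i, a i := Finset.sum_le_sum (fun i _ => hlb i)
  have hsum_ub : ∑ i, a i ≤ p * a i₀ := by
    calc ∑ i, a i ≤ ∑ _i : Fin p, a i₀ := Finset.sum_le_sum (fun i _ => hub i)
      _ = p * a i₀ := by
          rw [Finset.sum_const, Finset.card_univ, Fintype.card_fin, smul_eq_mul]
  rw [h] at hsum_lb hsum_ub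
  have hμk : a j₀ ≤ k := by
    by_contra hge
    push_neg at hge
    have h2 : p * (k+1) ≤ p * a j₀ := Nat.mul_le_mul_left _ hge
    have h3 : p * (k+1) ≤ k * p + q := le_trans h2 hsum_lb
    rw [show p * (k+1) = k * p + p by ring] at h3
    omega
  have hMk : k + 1 ≤ a i₀ := by
    by_contra hge
    push_neg at hge
    have h2 : p * a i₀ ≤ p * k := Nat.mul_le_mul_left _ (by omega)
    have h3 : k * p + q ≤ p * k := le_trans hsum_ub h2
    rw [show p * k = k * p by ring] at h3
    omega
  have hM2 : a j₀ + 2 ≤ a i₀ := by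
    have h1 := hub i₁
    have h2 := hlb i₁
    omega
  exact no_cycle_spread hp hM2 hub hlb rfl rfl hleg htig hlen hwin

def cfg (p k : ℕ) [NeZero p] (T : Finset (Fin p)) : Fin p → ℕ := fun i => if i ∈ T then k+1 else k

lemma succ_closed_univ (hp : 1 < p) {U : Finset (Fin p)} (hcl : ∀ i ∈ U, i + 1 ∈ U)
    (hne : U.Nonempty) : U = Finset.univ := by
  obtain ⟨i₀, hi₀⟩ := hne
  have hm : ∀ m : ℕ, i₀ + (m : Fin p) ∈ U := by
    intro m
    induction m with
    | zero => simpa using hi₀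
    | succ n ih =>
      have : i₀ + ((n+1 : ℕ) : Fin p) = (i₀ + (n : Fin p)) + 1 := by push_cast; ring
      rw [this]
      exact hcl _ ih
  apply Finset.eq_univ_iff_forall.mpr
  intro j
  have := hm ((j - i₀).val)
  rwa [Fin.cast_val_eq_self, add_sub_cancel] at this

lemma cfg_move (hp : 1 < p) (k : ℕ) {W : Finset (Fin p)} {i : Fin p}
    (hi : i ∈ W) (hi1 : i + 1 ∉ W) :
    Move p (cfg p k W) (cfg p k (insert (i+1) (W.erase i))) := by
  refine ⟨i, ?_, ?_⟩
  · show cfg p k W (i+1) < cfg p k W i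
    rw [cfg, if_neg hi1, cfg, if_pos hi]
    omega
  · funext j
    rw [step_apply]
    rcases eq_or_ne j (i+1) with rfl | h1
    · rw [if_pos rfl, cfg, if_pos (Finset.mem_insert_self _ _), cfg, if_neg hi1]
    · rw [if_neg h1]
      rcases eq_or_ne j i with rfl | h2
      · rw [if_pos rfl, cfg, cfg, if_pos hi]
        have : j ∉ insert (j+1) (W.erase j) := by
          intro hmem
          rcases Finset.mem_insert.mp hmem with he | he
          · exact my_succ_ne hp j he.symm
          · exact (Finset.mem_erase.mp he).1 rfl
        rw [if_neg this]
        omega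
      · rw [if_neg h2, cfg, cfg]
        have : j ∈ insert (i+1) (W.erase i) ↔ j ∈ W := by
          rw [Finset.mem_insert, Finset.mem_erase]
          constructor
          · rintro (he | ⟨-, hw⟩)
            · exact absurd he h1
            · exact hw
          · intro hw; exact Or.inr ⟨h2, hw⟩
        by_cases hw : j ∈ W
        · rw [if_pos hw, if_pos (this.mpr hw)]
        · rw [if_neg hw, if_neg (fun hmem => hw (this.mp hmem))]

lemma shift_reach (hp : 1 < p) (k : ℕ) :
    ∀ U : Finset (Fin p), ∀ S : Finset (Fin p), Disjoint U S →
      Disjoint U (S.image (· + 1)) → U.card + S.card < p →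
      Relation.ReflTransGen (Move p) (cfg p k (U ∪ S.image (· + 1)))
        (cfg p k ((U ∪ S).image (· + 1))) := by
  intro U
  induction U using Finset.strongInduction with
  | _ U ih =>
    intro S hd1 hd2 hcard
    rcases U.eq_empty_or_nonempty with rfl | hUne
    · simp only [Finset.empty_union]
      exact Relation.ReflTransGen.refl
    · have hfound : ∃ i ∈ U, i + 1 ∉ U ∪ S.image (· + 1) := by
        by_contra hno
        push_neg at hno
        have hcl : ∀ i ∈ U, i + 1 ∈ U := by
          intro i hi
          rcases Finset.mem_union.mp (hno i hi) with h | h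
          · exact h
          · exfalso
            obtain ⟨x, hx, hxe⟩ := Finset.mem_image.mp h
            have : x = i := add_right_cancel hxe
            subst this
            exact (Finset.disjoint_left.mp hd1) hi hx
        have := succ_closed_univ hp hcl hUne
        rw [this, Finset.card_univ, Fintype.card_fin] at hcard
        omega
      obtain ⟨i, hiU, hi1⟩ := hfound
      have hiW : i ∈ U ∪ S.image (· + 1) := Finset.mem_union_left _ hiU
      have hmv := cfg_move hp k hiW hi1
      have hi1U : i + 1 ∉ U := fun h => hi1 (Finset.mem_union_left _ h)
      have hiS : i ∉ S := Finset.disjoint_left.mp hd1 hiU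
      have hiS1 : i ∉ S.image (· + 1) := Finset.disjoint_left.mp hd2 hiU
      have hWeq : insert (i+1) ((U ∪ S.image (· + 1)).erase i)
          = (U.erase i) ∪ ((insert i S).image (· + 1)) := by
        ext j
        simp only [Finset.mem_insert, Finset.mem_erase, Finset.mem_union, Finset.mem_image]
        constructor
        · rintro (rfl | ⟨hne, hU | ⟨x, hx, hxe⟩⟩)
          · exact Or.inr ⟨i, Or.inl rfl, rfl⟩
          · exact Or.inl ⟨hne, hU⟩
          · exact Or.inr ⟨x, Or.inr hx, hxe⟩
        · rintro (⟨hne, hU⟩ | ⟨x, hx, hxe⟩)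
          · exact Or.inr ⟨hne, Or.inl hU⟩
          · rcases hx with rfl | hxS
            · exact Or.inl hxe.symm
            · refine Or.inr ⟨?_, Or.inr ⟨x, hxS, hxe⟩⟩
              intro he
              rw [he] at hxe
              exact hiS1 (Finset.mem_image.mpr ⟨x, hxS, hxe⟩)
      have hrest := ih (U.erase i) (Finset.erase_ssubset hiU) (insert i S)
        (by
          rw [Finset.disjoint_left]
          intro x hx hx2
          rcases Finset.mem_insert.mp hx2 with rfl | hxS
          · exact (Finset.mem_erase.mp hx).1 rfl
          · exact Finset.disjoint_left.mp hd1 (Finset.mem_of_mem_erase hx) hxS)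
        (by
          rw [Finset.disjoint_left]
          intro x hx hx2
          obtain ⟨y, hy, hye⟩ := Finset.mem_image.mp hx2
          rcases Finset.mem_insert.mp hy with rfl | hyS
          · rw [← hye] at hx
            exact hi1U (Finset.mem_of_mem_erase hx)
          · exact Finset.disjoint_left.mp hd2 (Finset.mem_of_mem_erase hx)
              (Finset.mem_image.mpr ⟨y, hyS, hye⟩))
        (by
          rw [Finset.card_erase_of_mem hiU, Finset.card_insert_of_notMem hiS]
          have : 0 < U.card := Finset.card_pos.mpr hUne
          omega)
      have hUeq : U.erase i ∪ insert i S = U ∪ S := by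
        ext j
        simp only [Finset.mem_union, Finset.mem_erase, Finset.mem_insert]
        constructor
        · rintro (⟨-, hU⟩ | (rfl | hS))
          · exact Or.inl hU
          · exact Or.inl hiU
          · exact Or.inr hS
        · rintro (hU | hS)
          · rcases eq_or_ne j i with rfl | hne
            · exact Or.inr (Or.inl rfl)
            · exact Or.inl ⟨hne, hU⟩
          · exact Or.inr (Or.inr hS)
      rw [hUeq] at hrest
      rw [← hWeq] at hrest
      exact Relation.ReflTransGen.head hmv hrest

lemma rot_one (hp : 1 < p) (k : ℕ) {T : Finset (Fin p)} (hTne : T.Nonempty)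
    (hTcard : T.card < p) :
    Relation.TransGen (Move p) (cfg p k T) (cfg p k (T.image (· + 1))) := by
  have hfound : ∃ i ∈ T, i + 1 ∉ T := by
    by_contra hno
    push_neg at hno
    have := succ_closed_univ hp hno hTne
    rw [this, Finset.card_univ, Fintype.card_fin] at hTcard
    omega
  obtain ⟨i, hiT, hi1⟩ := hfound
  have hmv := cfg_move hp k hiT hi1
  have hWeq : insert (i+1) (T.erase i) = (T.erase i) ∪ (({i} : Finset (Fin p)).image (· + 1)) := by
    ext j
    simp only [Finset.mem_insert, Finset.mem_erase, Finset.mem_union, Finset.mem_image,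
      Finset.mem_singleton]
    constructor
    · rintro (rfl | h)
      · exact Or.inr ⟨i, rfl, rfl⟩
      · exact Or.inl h
    · rintro (h | ⟨x, rfl, hxe⟩)
      · exact Or.inr h
      · exact Or.inl hxe.symm
  have hrest := shift_reach hp k (T.erase i) {i}
    (by
      rw [Finset.disjoint_left]
      intro x hx hx2
      rw [Finset.mem_singleton] at hx2
      exact (Finset.mem_erase.mp hx).1 hx2)
    (by
      rw [Finset.disjoint_left]
      intro x hx hx2
      obtain ⟨y, hy, hye⟩ := Finset.mem_image.mp hx2
      rw [Finset.mem_singleton] at hy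
      subst hy
      rw [← hye] at hx
      exact hi1 (Finset.mem_of_mem_erase hx))
    (by
      rw [Finset.card_erase_of_mem hiT, Finset.card_singleton]
      have : 0 < T.card := Finset.card_pos.mpr hTne
      omega)
  have hUeq : T.erase i ∪ {i} = T := by
    ext j
    simp only [Finset.mem_union, Finset.mem_erase, Finset.mem_singleton]
    constructor
    · rintro (⟨-, h⟩ | rfl)
      · exact h
      · exact hiT
    · intro hj
      rcases eq_or_ne j i with rfl | hne
      · exact Or.inr rfl
      · exact Or.inl ⟨hne, hj⟩
  rw [hUeq] at hrest
  rw [← hWeq] at hrest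
  exact Relation.TransGen.head' hmv hrest

lemma backward_dir {k q : ℕ} (hq : 0 < q) (hqp : q < p)
    {a : Fin p → ℕ} (h : ∑ i, a i = k * p + q)
    (hall : ∀ i, a i = k ∨ a i = k + 1) : Relation.TransGen (Move p) a a := by
  classical
  have hp : 1 < p := by omega
  set T : Finset (Fin p) := Finset.univ.filter (fun i => a i = k+1) with hTdef
  have ha : a = cfg p k T := by
    funext i
    rcases hall i with hk | hk1
    · rw [cfg, if_neg, hk]
      rw [hTdef]
      simp only [Finset.mem_filter, Finset.mem_univ, true_and]
      omega
    · rw [cfg, if_pos, hk1]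
      rw [hTdef]
      simp only [Finset.mem_filter, Finset.mem_univ, true_and]
      exact hk1
  have hsum : ∑ i, cfg p k T i = p * k + T.card := by
    have h1 : ∀ i : Fin p, cfg p k T i = k + (if i ∈ T then 1 else 0) := by
      intro i; rw [cfg]; split_ifs <;> omega
    rw [Finset.sum_congr rfl (fun i _ => h1 i), Finset.sum_add_distrib, Finset.sum_const,
      Finset.sum_ite_mem, Finset.univ_inter, Finset.sum_const]
    simp [Finset.card_univ, mul_comm]
  have hTcard : T.card = q := by
    have h2 := h
    rw [ha, hsum, mul_comm p k] at h2
    omega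
  have hTne : T.Nonempty := Finset.card_pos.mp (by omega)
  have hrotN : ∀ N : ℕ,
      Relation.TransGen (Move p) (cfg p k T) (cfg p k (T.image (· + ((N+1 : ℕ) : Fin p)))) := by
    intro N
    induction N with
    | zero =>
      have h1 := rot_one hp k hTne (by omega)
      have e : ((0+1 : ℕ) : Fin p) = 1 := by norm_num
      rw [e]
      exact h1
    | succ n ih =>
      have himgne : (T.image (· + ((n+1 : ℕ) : Fin p))).Nonempty := hTne.image _
      have himgcard : (T.image (· + ((n+1:ℕ) : Fin p))).card < p := by
        rw [Finset.card_image_of_injective _ (add_left_injective _)]; omega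
      have h2 := rot_one hp k himgne himgcard
      rw [Finset.image_image] at h2
      have e : ((· + 1) ∘ (· + ((n+1:ℕ) : Fin p))) = (· + ((n+1+1:ℕ) : Fin p)) := by
        funext x; simp only [Function.comp_apply]; push_cast; ring
      rw [e] at h2
      exact ih.trans h2
  have hfinal := hrotN (p - 1)
  have e2 : ((p - 1 + 1 : ℕ) : Fin p) = 0 := by
    rw [show p - 1 + 1 = p by omega]
    exact Fin.natCast_self p
  rw [e2] at hfinal
  have e3 : T.image (· + (0 : Fin p)) = T := by
    simp only [add_zero]
    exact Finset.image_id
  rw [e3] at hfinal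
  rw [ha]
  exact hfinal


/-- A configuration lies on a nontrivial cycle iff all its entries are `k` or `k+1`. -/
theorem stmt3 (p k q : ℕ) [NeZero p] (hq : 0 < q) (hqp : q < p)
    (a : Fin p → ℕ) (h : ∑ i, a i = k * p + q) :
    Relation.TransGen (Move p) a a ↔ ∀ i, a i = k ∨ a i = k + 1 := by
  exact ⟨fun hc => forward_dir hq hqp h hc, fun hall => backward_dir hq hqp h hall⟩
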